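/- arXiv:1106.0783 — 3 statements merged into one kernel-verified Lean document; each statement's English description precedes it below -/
import Mathlib

section
/- Let X_1,...,X_L be independent real random variables with E[X_i] = 0 and |X_i| ≤ M for all i, and let S_ℓ := X_1 + ... + X_ℓ. Then for every t > 0, P[max_{1 ≤ ℓ ≤ L} |S_ℓ| > t] ≤ 2·exp(−(t²/2)/(Σ_{i=1}^L E[X_i²] + Mt/3)). -/
open MeasureTheory ProbabilityTheory Filter

section AuxMaximalBernstein
open Real Nat MeasureTheory ProbabilityTheory Finset
open scoped ENNReal NNReal



lemma factorial_ge : ∀ n : ℕ, (2 * 3 ^ n : ℝ) ≤ (n + 2) ! := by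
  intro n
  induction n with
  | zero => norm_num
  | succ k ih =>
      have : ((k + 1) + 2)! = ((k + 3) : ℕ) * (k + 2) ! := by
        show (k + 3) ! = _
        rw [Nat.factorial_succ]
      rw [this]
      push_cast
      calc (2 * 3 ^ (k+1) : ℝ) = 3 * (2 * 3 ^ k) := by ring
      _ ≤ 3 * ((k + 2) ! : ℝ) := by
          apply mul_le_mul_of_nonneg_left ih (by norm_num)
      _ ≤ (k + 3) * ((k+2) ! : ℝ) := by
          apply mul_le_mul_of_nonneg_right ?_ (by positivity)
          have := Nat.cast_nonneg (α := ℝ) k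
          linarith

lemma exp_pointwise_bound {l M x : ℝ} (hl : 0 ≤ l) (hx : |x| ≤ M)
    (hq : l * M / 3 < 1) :
    Real.exp (l * x) ≤ 1 + l * x + x ^ 2 * (l ^ 2 / (2 * (1 - l * M / 3))) := by
  have hM : 0 ≤ M := le_trans (abs_nonneg x) hx
  set q := l * M / 3 with hqdef
  have hq0 : 0 ≤ q := by positivity
  have hsum : Summable fun n : ℕ => (l * x) ^ n / n ! := Real.summable_pow_div_factorial _
  have hexp : Real.exp (l * x) = ∑' n : ℕ, (l * x) ^ n / n ! := by
    rw [Real.exp_eq_exp_ℝ, NormedSpace.exp_eq_tsum_div]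
  have hsum2 : Summable fun n : ℕ => (l * x) ^ (n + 2) / (n + 2) ! :=
    ((summable_nat_add_iff 2).2 hsum)
  have hsplit : Real.exp (l * x) = 1 + l * x + ∑' n : ℕ, (l * x) ^ (n + 2) / (n + 2) ! := by
    rw [hexp, Summable.tsum_eq_zero_add hsum]
    rw [Summable.tsum_eq_zero_add ((summable_nat_add_iff 1).2 hsum)]
    simp [Nat.factorial]
    ring
  rw [hsplit]
  have key : ∀ n : ℕ, (l * x) ^ (n + 2) / (n + 2) ! ≤ x ^ 2 * (l ^ 2 / 2) * q ^ n := by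
    intro n
    have h1 : (l * x) ^ (n + 2) ≤ |l * x| ^ (n + 2) := le_abs_self _ |>.trans (by rw [abs_pow])
    have h2 : |l * x| ^ (n + 2) = l ^ (n+2) * |x| ^ (n + 2) := by
      rw [abs_mul, mul_pow, abs_of_nonneg hl]
    have h3 : |x| ^ (n + 2) ≤ x ^ 2 * M ^ n := by
      have : |x| ^ (n + 2) = |x| ^ 2 * |x| ^ n := by ring
      rw [this, sq_abs]
      exact mul_le_mul_of_nonneg_left (pow_le_pow_left₀ (abs_nonneg x) hx n) (by positivity)
    have hfac : (2 * 3 ^ n : ℝ) ≤ (n + 2) ! := factorial_ge n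
    have hfacpos : (0:ℝ) < (n+2) ! := by positivity
    calc (l * x) ^ (n + 2) / (n + 2) ! ≤ l ^ (n+2) * (x ^ 2 * M ^ n) / (n+2) ! := by
          gcongr
          calc (l * x) ^ (n+2) ≤ l ^ (n+2) * |x| ^ (n+2) := by rw [← h2]; exact h1
          _ ≤ l ^ (n+2) * (x ^ 2 * M ^ n) := mul_le_mul_of_nonneg_left h3 (by positivity)
    _ ≤ l ^ (n+2) * (x ^ 2 * M ^ n) / (2 * 3 ^ n) := by
          apply div_le_div_of_nonneg_left (by positivity) (by positivity) hfac
    _ = x ^ 2 * (l ^ 2 / 2) * q ^ n := by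
          rw [hqdef]
          rw [div_pow, mul_pow]
          field_simp
          ring
  have hgsum : Summable fun n : ℕ => x ^ 2 * (l ^ 2 / 2) * q ^ n :=
    (summable_geometric_of_lt_one hq0 hq).mul_left _
  have : ∑' n : ℕ, (l * x) ^ (n + 2) / (n + 2) ! ≤ ∑' n : ℕ, x ^ 2 * (l ^ 2 / 2) * q ^ n :=
    Summable.tsum_le_tsum key hsum2 hgsum
  refine add_le_add_right (this.trans ?_) _
  rw [tsum_mul_left, tsum_geometric_of_lt_one hq0 hq]
  apply le_of_eq
  have h1q : (1 : ℝ) - q ≠ 0 := by linarith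
  field_simp

open MeasureTheory in
lemma integrable_of_abs_le {Ω : Type*} [MeasurableSpace Ω] {μ : Measure Ω} [IsProbabilityMeasure μ]
    {f : Ω → ℝ} (hm : Measurable f) {C : ℝ} (h : ∀ᵐ ω ∂μ, |f ω| ≤ C) : Integrable f μ :=
  Integrable.mono' (integrable_const C) hm.aestronglyMeasurable h

open MeasureTheory in
lemma mgf_single_bound {Ω : Type*} [MeasurableSpace Ω] {μ : Measure Ω} [IsProbabilityMeasure μ]
    {X : Ω → ℝ} {M l : ℝ} (hm : Measurable X) (hint : Integrable X μ)
    (hmean : ∫ ω, X ω ∂μ = 0) (hbdd : ∀ᵐ ω ∂μ, |X ω| ≤ M)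
    (hl : 0 ≤ l) (hq : l * M / 3 < 1) :
    ∫ ω, Real.exp (l * X ω) ∂μ ≤
      Real.exp ((l ^ 2 / (2 * (1 - l * M / 3))) * ∫ ω, (X ω) ^ 2 ∂μ) := by
  set c : ℝ := l ^ 2 / (2 * (1 - l * M / 3)) with hc
  have hc0 : 0 ≤ c := by
    apply div_nonneg (by positivity)
    nlinarith
  have hintexp : Integrable (fun ω => Real.exp (l * X ω)) μ := by
    refine integrable_of_abs_le (by fun_prop) (C := Real.exp (l * M)) ?_
    filter_upwards [hbdd] with ω hω
    rw [abs_of_nonneg (Real.exp_nonneg _)]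
    exact Real.exp_le_exp.2 (mul_le_mul_of_nonneg_left ((le_abs_self _).trans hω) hl)
  have hintX2 : Integrable (fun ω => (X ω) ^ 2) μ := by
    refine integrable_of_abs_le (by fun_prop) (C := M ^ 2) ?_
    filter_upwards [hbdd] with ω hω
    rw [abs_of_nonneg (sq_nonneg _), ← sq_abs]
    exact pow_le_pow_left₀ (abs_nonneg _) hω 2
  have hpt : ∀ᵐ ω ∂μ, Real.exp (l * X ω) ≤ 1 + l * X ω + (X ω) ^ 2 * c := by
    filter_upwards [hbdd] with ω hω
    exact exp_pointwise_bound hl hω hq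
  have hrhs : Integrable (fun ω => 1 + l * X ω + (X ω) ^ 2 * c) μ :=
    ((integrable_const 1).add (hint.const_mul l)).add (hintX2.mul_const c)
  have h1 : ∫ ω, Real.exp (l * X ω) ∂μ ≤ ∫ ω, (1 + l * X ω + (X ω) ^ 2 * c) ∂μ :=
    integral_mono_ae hintexp hrhs hpt
  have h2 : ∫ ω, (1 + l * X ω + (X ω) ^ 2 * c) ∂μ = 1 + c * ∫ ω, (X ω) ^ 2 ∂μ := by
    have hf1 : Integrable (fun ω => 1 + l * X ω) μ :=
      (integrable_const 1).add (hint.const_mul l)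
    have hf0 : Integrable (fun ω => l * X ω) μ := hint.const_mul l
    rw [integral_add hf1 (hintX2.mul_const c), integral_add (integrable_const 1) hf0,
      integral_const, integral_const_mul, integral_mul_const, hmean]
    simp [mul_comm]
  have h3 : 1 + c * ∫ ω, (X ω) ^ 2 ∂μ ≤ Real.exp (c * ∫ ω, (X ω) ^ 2 ∂μ) := by
    have := Real.add_one_le_exp (c * ∫ ω, (X ω) ^ 2 ∂μ)
    linarith
  exact h1.trans (h2.trans_le h3)


lemma one_sided_max_bernstein {Ω : Type*} [MeasurableSpace Ω] (μ : Measure Ω)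
    [IsProbabilityMeasure μ]
    (L : ℕ) (X : Fin L → Ω → ℝ) (M : ℝ)
    (hmeas : ∀ i, Measurable (X i))
    (hindep : iIndepFun X μ)
    (hint : ∀ i, Integrable (X i) μ)
    (hmean : ∀ i, ∫ ω, X i ω ∂μ = 0)
    (hbdd : ∀ i, ∀ᵐ ω ∂μ, |X i ω| ≤ M)
    (t : ℝ) (ht : 0 < t) (hL : 0 < L)
    (hV : 0 < ∑ i, ∫ ω, (X i ω) ^ 2 ∂μ) :
    μ {ω | ∃ ℓ : ℕ, 1 ≤ ℓ ∧ ℓ ≤ L ∧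
        t < ∑ i ∈ Finset.univ.filter (fun i : Fin L => (i : ℕ) < ℓ), X i ω}
      ≤ ENNReal.ofReal (Real.exp
          (-(t ^ 2 / 2) / ((∑ i, ∫ ω, (X i ω) ^ 2 ∂μ) + M * t / 3))) := by
  set V : ℝ := ∑ i, ∫ ω, (X i ω) ^ 2 ∂μ with hVdef
  have hM : 0 ≤ M := by
    haveI : (MeasureTheory.ae μ).NeBot := ae_neBot.2 (IsProbabilityMeasure.ne_zero μ)
    obtain ⟨ω, hω⟩ := (hbdd ⟨0, hL⟩).exists
    exact (abs_nonneg _).trans hω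
  obtain ⟨D, hDdef⟩ : ∃ D : ℝ, D = V + M * t / 3 := ⟨_, rfl⟩
  have hD : 0 < D := by
    have h1 : 0 ≤ M * t / 3 := by positivity
    rw [hDdef]; linarith
  obtain ⟨l, hldef⟩ : ∃ l : ℝ, l = t / D := ⟨_, rfl⟩
  have hl : 0 < l := hldef ▸ div_pos ht hD
  have h3D : 3 * D = 3 * V + M * t := by rw [hDdef]; ring
  have hq1 : 1 - l * M / 3 = V / D := by
    rw [hldef]
    field_simp
    nlinarith [h3D, hD, hV]
  have hqlt : l * M / 3 < 1 := by
    have h2 : 0 < V / D := div_pos hV hD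
    linarith [hq1]
  -- the exponential submartingale
  set f : ℕ → Ω → ℝ := fun n ω => Real.exp
    (l * ∑ i ∈ Finset.univ.filter (fun i : Fin L => (i : ℕ) ≤ min n (L - 1)), X i ω) with hfdef
  set 𝒢 : Filtration ℕ (inferInstance : MeasurableSpace Ω) :=
    ⟨fun n => ⨆ k ∈ {k : Fin L | (k : ℕ) ≤ n}, MeasurableSpace.comap (X k) inferInstance,
     fun i j hij => biSup_mono (fun k hk => hk.trans hij),
     fun n => iSup₂_le fun k _ => (hmeas k).comap_le⟩ with h𝒢def
  have hXG : ∀ (n : ℕ) (k : Fin L), (k : ℕ) ≤ n → Measurable[𝒢 n] (X k) := by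
    intro n k hk
    exact (comap_measurable (X k)).mono
      (le_iSup₂ (f := fun (k : Fin L) (_ : (k : ℕ) ≤ n) =>
        MeasurableSpace.comap (X k) inferInstance) k hk) le_rfl
  have hfmeas : ∀ n, StronglyMeasurable[𝒢 n] (f n) := by
    intro n
    apply Measurable.stronglyMeasurable
    apply Measurable.exp
    apply Measurable.const_mul
    refine Finset.measurable_sum _ fun i hi => hXG n i ?_
    simp only [Finset.mem_filter] at hi
    omega
  have hfab : ∀ n, ∀ᵐ ω ∂μ, |f n ω| ≤ Real.exp (l * (L * M)) := by
    intro n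
    filter_upwards [ae_all_iff.2 hbdd] with ω hω
    rw [abs_of_nonneg (Real.exp_nonneg _)]
    apply Real.exp_le_exp.2
    apply mul_le_mul_of_nonneg_left ?_ hl.le
    calc (∑ i ∈ Finset.univ.filter (fun i : Fin L => (i : ℕ) ≤ min n (L - 1)), X i ω)
        ≤ ∑ i ∈ Finset.univ.filter (fun i : Fin L => (i : ℕ) ≤ min n (L - 1)), M :=
          Finset.sum_le_sum fun i _ => (le_abs_self _).trans (hω i)
      _ = (Finset.univ.filter (fun i : Fin L => (i : ℕ) ≤ min n (L - 1))).card * M := by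
          rw [Finset.sum_const, nsmul_eq_mul]
      _ ≤ L * M := by
          apply mul_le_mul_of_nonneg_right ?_ hM
          have h1 : (Finset.univ.filter (fun i : Fin L => (i : ℕ) ≤ min n (L - 1))).card ≤ L := by
            calc _ ≤ (Finset.univ : Finset (Fin L)).card := Finset.card_filter_le _ _
            _ = L := by simp
          exact_mod_cast h1
  have hfint : ∀ n, Integrable (f n) μ := by
    intro n
    refine Integrable.mono' (integrable_const (Real.exp (l * (L * M)))) ?_ (hfab n)
    apply Measurable.aestronglyMeasurable
    exact (Measurable.const_mul (Finset.measurable_sum _ fun i _ => hmeas i) l).exp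
  have hadp : StronglyAdapted 𝒢 f := fun n => hfmeas n
  -- submartingale property
  have hstep : ∀ n, f n ≤ᵐ[μ] μ[f (n + 1)|𝒢 n] := by
    intro n
    by_cases hn : L - 1 ≤ n
    · have hEq : f (n + 1) = f n := by
        funext ω
        simp only [hfdef]
        rw [min_eq_right hn, min_eq_right (hn.trans (Nat.le_succ n))]
      rw [hEq, condExp_of_stronglyMeasurable (𝒢.le n) (hfmeas n) (hfint n)]
    · push_neg at hn
      have hjlt : n + 1 < L := by omega
      set j : Fin L := ⟨n + 1, hjlt⟩ with hjdef
      set g : Ω → ℝ := fun ω => Real.exp (l * X j ω) with hgdef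
      have hsplit : f (n + 1) = f n * g := by
        funext ω
        simp only [hfdef, hgdef, Pi.mul_apply, ← Real.exp_add, ← mul_add]
        congr 2
        have hins : Finset.univ.filter (fun i : Fin L => (i : ℕ) ≤ min (n+1) (L - 1))
            = insert j (Finset.univ.filter (fun i : Fin L => (i : ℕ) ≤ min n (L - 1))) := by
          ext i
          simp only [Finset.mem_filter, Finset.mem_insert, Finset.mem_univ, true_and,
            Fin.ext_iff]
          have := i.isLt
          simp only [hjdef, Fin.val_mk, min_eq_left hn.le, min_eq_left (show n + 1 ≤ L - 1 by omega)]
          omega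
        rw [hins, Finset.sum_insert (by
          intro hmem
          simp only [Finset.mem_filter, Finset.mem_univ, true_and, hjdef, Fin.val_mk] at hmem
          omega)]
        ring
      have hgint : Integrable g μ := by
        refine Integrable.mono' (integrable_const (Real.exp (l * M))) ?_ ?_
        · exact (Measurable.const_mul (hmeas j) l).exp.aestronglyMeasurable
        · filter_upwards [hbdd j] with ω hω
          rw [Real.norm_eq_abs, abs_of_nonneg (Real.exp_nonneg _)]
          exact Real.exp_le_exp.2 (mul_le_mul_of_nonneg_left ((le_abs_self _).trans hω) hl.le)
      have hfgint : Integrable (f n * g) μ := hsplit ▸ hfint (n + 1)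
      have hgsm : StronglyMeasurable[MeasurableSpace.comap (X j) inferInstance] g :=
        (((comap_measurable (X j)).const_mul l).exp).stronglyMeasurable
      have hind : ProbabilityTheory.Indep (MeasurableSpace.comap (X j) inferInstance) (𝒢 n) μ := by
        have hdisj : Disjoint ({j} : Set (Fin L)) {k : Fin L | (k : ℕ) ≤ n} := by
          rw [Set.disjoint_left]
          rintro k rfl hk2
          simp only [Set.mem_setOf_eq, hjdef] at hk2
          omega
        have h5 := indep_iSup_of_disjoint (fun k => (hmeas k).comap_le) hindep.iIndep hdisj
        rw [_root_.iSup_singleton] at h5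
        exact h5
      have hcondg : μ[g|𝒢 n] =ᵐ[μ] fun _ => ∫ x, g x ∂μ :=
        condExp_indep_eq ((hmeas j).comap_le) (𝒢.le n) hgsm hind
      have h1 : μ[f (n+1)|𝒢 n] =ᵐ[μ] f n * μ[g|𝒢 n] := by
        rw [hsplit]
        exact condExp_mul_of_stronglyMeasurable_left (hfmeas n) hfgint hgint
      have hEg : 1 ≤ ∫ x, g x ∂μ := by
        have hf1 : Integrable (fun ω => 1 + l * X j ω) μ :=
          (integrable_const 1).add ((hint j).const_mul l)
        have heq : ∫ ω, (1 + l * X j ω) ∂μ = 1 := by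
          rw [integral_add (integrable_const 1) ((hint j).const_mul l), integral_const,
            integral_const_mul, hmean j]
          simp
        calc (1:ℝ) = ∫ ω, (1 + l * X j ω) ∂μ := heq.symm
          _ ≤ ∫ x, g x ∂μ := by
              apply integral_mono hf1 hgint
              intro ω
              have := Real.add_one_le_exp (l * X j ω)
              simp only [hgdef]
              linarith
      filter_upwards [h1, hcondg] with ω hω1 hω2
      rw [hω1, Pi.mul_apply, hω2]
      exact le_mul_of_one_le_right (Real.exp_nonneg _) hEg
  have hsub : Submartingale f 𝒢 μ := submartingale_nat hadp hfint hstep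
  have hnonneg : 0 ≤ f := by
    intro n ω
    exact Real.exp_nonneg _
  set ε : NNReal := Real.toNNReal (Real.exp (l * t)) with hεdef
  have hεcoe : (ε : ℝ) = Real.exp (l * t) := Real.coe_toNNReal _ (Real.exp_nonneg _)
  have hdoob := maximal_ineq hsub hnonneg (ε := ε) (L - 1)
  -- event inclusion
  have hsubset : {ω | ∃ ℓ : ℕ, 1 ≤ ℓ ∧ ℓ ≤ L ∧
      t < ∑ i ∈ Finset.univ.filter (fun i : Fin L => (i : ℕ) < ℓ), X i ω}
      ⊆ {ω | (ε : ℝ) ≤ (Finset.range (L - 1 + 1)).sup' Finset.nonempty_range_add_one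
          fun k => f k ω} := by
    rintro ω ⟨ℓ, h1, h2, h3⟩
    have hk : ℓ - 1 ∈ Finset.range (L - 1 + 1) := by
      simp only [Finset.mem_range]; omega
    have hfilter : Finset.univ.filter (fun i : Fin L => (i : ℕ) ≤ min (ℓ - 1) (L - 1))
        = Finset.univ.filter (fun i : Fin L => (i : ℕ) < ℓ) := by
      ext i
      simp only [Finset.mem_filter, Finset.mem_univ, true_and]
      have := i.isLt
      omega
    have hfk : f (ℓ - 1) ω = Real.exp (l * ∑ i ∈ Finset.univ.filter
        (fun i : Fin L => (i : ℕ) < ℓ), X i ω) := by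
      simp only [hfdef]
      rw [hfilter]
    refine le_trans ?_ (Finset.le_sup' (fun k => f k ω) hk)
    rw [hfk, hεcoe]
    exact Real.exp_le_exp.2 (mul_le_mul_of_nonneg_left h3.le hl.le)
  -- the integral of the last value is the mgf product
  have hflast : f (L - 1) = fun ω => Real.exp (l * (∑ i, X i) ω) := by
    funext ω
    simp only [hfdef, Finset.sum_apply]
    congr 2
    have huniv : Finset.univ.filter (fun i : Fin L => (i : ℕ) ≤ min (L - 1) (L - 1))
        = Finset.univ := by
      ext i
      simp only [Finset.mem_filter, Finset.mem_univ, true_and, iff_true]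
      have := i.isLt
      omega
    rw [huniv]
  have hI : ∫ ω, f (L - 1) ω ∂μ = ∏ i, mgf (X i) μ l := by
    have : ∫ ω, f (L - 1) ω ∂μ = mgf (∑ i, X i) μ l := by
      rw [hflast]; rfl
    rw [this, hindep.mgf_sum hmeas Finset.univ]
  obtain ⟨c, hcdef⟩ : ∃ c : ℝ, c = l ^ 2 / (2 * (1 - l * M / 3)) := ⟨_, rfl⟩
  have hbound : ∀ i : Fin L, mgf (X i) μ l ≤ Real.exp (c * ∫ ω, (X i ω) ^ 2 ∂μ) := by
    intro i
    rw [hcdef]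
    exact mgf_single_bound (hmeas i) (hint i) (hmean i) (hbdd i) hl.le hqlt
  have hprod : ∫ ω, f (L - 1) ω ∂μ ≤ Real.exp (c * V) := by
    rw [hI]
    calc (∏ i, mgf (X i) μ l) ≤ ∏ i, Real.exp (c * ∫ ω, (X i ω) ^ 2 ∂μ) :=
        Finset.prod_le_prod (fun i _ => mgf_nonneg) (fun i _ => hbound i)
      _ = Real.exp (∑ i, c * ∫ ω, (X i ω) ^ 2 ∂μ) := (Real.exp_sum _ _).symm
      _ = Real.exp (c * V) := by rw [← Finset.mul_sum]
  have harith : c * V - l * t = -(t ^ 2 / 2) / D := by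
    have hc2 : c = l ^ 2 * D / (2 * V) := by
      rw [hcdef, hq1]
      field_simp
    rw [hc2, hldef]
    field_simp
    ring
  have hε0 : (ε : ℝ≥0∞) ≠ 0 :=
    ENNReal.coe_ne_zero.2 (Real.toNNReal_pos.2 (Real.exp_pos _)).ne'
  have hεofReal : (ε : ℝ≥0∞) = ENNReal.ofReal (Real.exp (l * t)) := rfl
  calc μ {ω | ∃ ℓ : ℕ, 1 ≤ ℓ ∧ ℓ ≤ L ∧
        t < ∑ i ∈ Finset.univ.filter (fun i : Fin L => (i : ℕ) < ℓ), X i ω}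
      ≤ μ {ω | (ε : ℝ) ≤ (Finset.range (L - 1 + 1)).sup' Finset.nonempty_range_add_one
          fun k => f k ω} := measure_mono hsubset
    _ ≤ ENNReal.ofReal (∫ ω, f (L - 1) ω ∂μ) / ε := by
        rw [ENNReal.le_div_iff_mul_le (Or.inl hε0) (Or.inl ENNReal.coe_ne_top), mul_comm]
        calc (ε : ℝ≥0∞) * μ {ω | (ε : ℝ) ≤ (Finset.range (L - 1 + 1)).sup'
              Finset.nonempty_range_add_one fun k => f k ω}
            = ε • μ {ω | (ε : ℝ) ≤ (Finset.range (L - 1 + 1)).sup'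
              Finset.nonempty_range_add_one fun k => f k ω} := (ENNReal.smul_def _ _).symm
          _ ≤ ENNReal.ofReal (∫ ω in {ω | (ε : ℝ) ≤ (Finset.range (L - 1 + 1)).sup'
              Finset.nonempty_range_add_one fun k => f k ω}, f (L - 1) ω ∂μ) := hdoob
          _ ≤ ENNReal.ofReal (∫ ω, f (L - 1) ω ∂μ) := ENNReal.ofReal_le_ofReal
              (setIntegral_le_integral (hfint _)
                (Filter.Eventually.of_forall fun ω => Real.exp_nonneg _))
    _ ≤ ENNReal.ofReal (Real.exp (c * V)) / ε :=
        ENNReal.div_le_div_right (ENNReal.ofReal_le_ofReal hprod) _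
    _ = ENNReal.ofReal (Real.exp (c * V)) / ENNReal.ofReal (Real.exp (l * t)) := by
        rw [hεofReal]
    _ = ENNReal.ofReal (Real.exp (c * V) / Real.exp (l * t)) :=
        (ENNReal.ofReal_div_of_pos (Real.exp_pos _)).symm
    _ = ENNReal.ofReal (Real.exp (c * V - l * t)) := by rw [Real.exp_sub]
    _ = ENNReal.ofReal (Real.exp (-(t ^ 2 / 2) / (V + M * t / 3))) := by
        rw [harith, hDdef]


end AuxMaximalBernstein

/-- Lemma 2.11 of the paper (a maximal Bernstein/Hoeffding-type inequality): if
`X_1, ..., X_L` are independent mean-zero random variables with `|X_i| ≤ M`, and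
`S_ℓ = X_1 + ⋯ + X_ℓ`, then for every `t > 0`,
`P[max_{1 ≤ ℓ ≤ L} |S_ℓ| > t] ≤ 2 exp(-(t²/2)/(∑ E[X_i²] + Mt/3))`. -/
theorem maximal_bernstein_abs
    {Ω : Type*} [MeasurableSpace Ω] (μ : Measure Ω) [IsProbabilityMeasure μ]
    (L : ℕ) (X : Fin L → Ω → ℝ) (M : ℝ)
    (hmeas : ∀ i, Measurable (X i))
    (hindep : iIndepFun X μ)
    (hint : ∀ i, Integrable (X i) μ)
    (hmean : ∀ i, ∫ ω, X i ω ∂μ = 0)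
    (hbdd : ∀ i, ∀ᵐ ω ∂μ, |X i ω| ≤ M)
    (t : ℝ) (ht : 0 < t) :
    μ {ω | ∃ ℓ : ℕ, 1 ≤ ℓ ∧ ℓ ≤ L ∧
        t < |∑ i ∈ Finset.univ.filter (fun i : Fin L => (i : ℕ) < ℓ), X i ω|}
      ≤ ENNReal.ofReal (2 * Real.exp
          (-(t ^ 2 / 2) / ((∑ i, ∫ ω, (X i ω) ^ 2 ∂μ) + M * t / 3))) := by
  rcases Nat.eq_zero_or_pos L with hL0 | hL
  · have hempty : {ω : Ω | ∃ ℓ : ℕ, 1 ≤ ℓ ∧ ℓ ≤ L ∧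
        t < |∑ i ∈ Finset.univ.filter (fun i : Fin L => (i : ℕ) < ℓ), X i ω|} = ∅ :=
      Set.eq_empty_iff_forall_notMem.2 (by rintro ω ⟨ℓ, h1, h2, _⟩; omega)
    rw [hempty, measure_empty]
    exact zero_le
  by_cases hV : 0 < ∑ i, ∫ ω, (X i ω) ^ 2 ∂μ
  · -- union bound with two one-sided estimates
    have hA := one_sided_max_bernstein μ L X M hmeas hindep hint hmean hbdd t ht hL hV
    have hmeas' : ∀ i, Measurable (fun ω => -X i ω) := fun i => (hmeas i).neg
    have hindep' : iIndepFun (fun i ω => -X i ω) μ :=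
      hindep.comp (fun _ (x : ℝ) => -x) (fun _ => measurable_neg)
    have hint' : ∀ i, Integrable (fun ω => -X i ω) μ := fun i => (hint i).neg
    have hmean' : ∀ i, ∫ ω, -X i ω ∂μ = 0 := by
      intro i
      rw [integral_neg, hmean i, neg_zero]
    have hbdd' : ∀ i, ∀ᵐ ω ∂μ, |-X i ω| ≤ M := by
      intro i
      filter_upwards [hbdd i] with ω hω
      rwa [abs_neg]
    have hV' : 0 < ∑ i, ∫ ω, (-X i ω) ^ 2 ∂μ := by
      simpa only [neg_sq] using hV
    have hB := one_sided_max_bernstein μ L (fun i ω => -X i ω) M hmeas' hindep' hint' hmean'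
      hbdd' t ht hL hV'
    have hVeq : ∑ i, ∫ ω, (-X i ω) ^ 2 ∂μ = ∑ i, ∫ ω, (X i ω) ^ 2 ∂μ := by
      simp only [neg_sq]
    rw [hVeq] at hB
    have hsub : {ω : Ω | ∃ ℓ : ℕ, 1 ≤ ℓ ∧ ℓ ≤ L ∧
        t < |∑ i ∈ Finset.univ.filter (fun i : Fin L => (i : ℕ) < ℓ), X i ω|}
        ⊆ {ω : Ω | ∃ ℓ : ℕ, 1 ≤ ℓ ∧ ℓ ≤ L ∧
            t < ∑ i ∈ Finset.univ.filter (fun i : Fin L => (i : ℕ) < ℓ), X i ω}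
          ∪ {ω : Ω | ∃ ℓ : ℕ, 1 ≤ ℓ ∧ ℓ ≤ L ∧
            t < ∑ i ∈ Finset.univ.filter (fun i : Fin L => (i : ℕ) < ℓ), -X i ω} := by
      rintro ω ⟨ℓ, h1, h2, h3⟩
      rcases lt_abs.1 h3 with h | h
      · exact Or.inl ⟨ℓ, h1, h2, h⟩
      · refine Or.inr ⟨ℓ, h1, h2, ?_⟩
        rw [Finset.sum_neg_distrib]
        exact h
    calc μ {ω : Ω | ∃ ℓ : ℕ, 1 ≤ ℓ ∧ ℓ ≤ L ∧
        t < |∑ i ∈ Finset.univ.filter (fun i : Fin L => (i : ℕ) < ℓ), X i ω|}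
        ≤ μ ({ω : Ω | ∃ ℓ : ℕ, 1 ≤ ℓ ∧ ℓ ≤ L ∧
            t < ∑ i ∈ Finset.univ.filter (fun i : Fin L => (i : ℕ) < ℓ), X i ω}
          ∪ {ω : Ω | ∃ ℓ : ℕ, 1 ≤ ℓ ∧ ℓ ≤ L ∧
            t < ∑ i ∈ Finset.univ.filter (fun i : Fin L => (i : ℕ) < ℓ), -X i ω}) :=
          measure_mono hsub
      _ ≤ μ {ω : Ω | ∃ ℓ : ℕ, 1 ≤ ℓ ∧ ℓ ≤ L ∧
            t < ∑ i ∈ Finset.univ.filter (fun i : Fin L => (i : ℕ) < ℓ), X i ω}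
          + μ {ω : Ω | ∃ ℓ : ℕ, 1 ≤ ℓ ∧ ℓ ≤ L ∧
            t < ∑ i ∈ Finset.univ.filter (fun i : Fin L => (i : ℕ) < ℓ), -X i ω} :=
          measure_union_le _ _
      _ ≤ ENNReal.ofReal (Real.exp
            (-(t ^ 2 / 2) / ((∑ i, ∫ ω, (X i ω) ^ 2 ∂μ) + M * t / 3)))
          + ENNReal.ofReal (Real.exp
            (-(t ^ 2 / 2) / ((∑ i, ∫ ω, (X i ω) ^ 2 ∂μ) + M * t / 3))) :=
          add_le_add hA hB
      _ = ENNReal.ofReal (2 * Real.exp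
            (-(t ^ 2 / 2) / ((∑ i, ∫ ω, (X i ω) ^ 2 ∂μ) + M * t / 3))) := by
          rw [← ENNReal.ofReal_add (Real.exp_nonneg _) (Real.exp_nonneg _)]
          rw [← two_mul]
  · -- degenerate case: all variables vanish a.e.
    have hnn : ∀ i : Fin L, 0 ≤ ∫ ω, (X i ω) ^ 2 ∂μ :=
      fun i => integral_nonneg fun ω => sq_nonneg _
    have hsum0 : ∑ i, ∫ ω, (X i ω) ^ 2 ∂μ = 0 :=
      le_antisymm (not_lt.1 hV) (Finset.sum_nonneg fun i _ => hnn i)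
    have hzero : ∀ i : Fin L, ∫ ω, (X i ω) ^ 2 ∂μ = 0 :=
      fun i => (Finset.sum_eq_zero_iff_of_nonneg fun i _ => hnn i).1 hsum0 i (Finset.mem_univ i)
    have hXae : ∀ i : Fin L, ∀ᵐ ω ∂μ, X i ω = 0 := by
      intro i
      have hint2 : Integrable (fun ω => (X i ω) ^ 2) μ := by
        refine integrable_of_abs_le (by fun_prop) (C := M ^ 2) ?_
        filter_upwards [hbdd i] with ω hω
        rw [abs_of_nonneg (sq_nonneg _), ← sq_abs]
        exact pow_le_pow_left₀ (abs_nonneg _) hω 2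
      have h0 := (integral_eq_zero_iff_of_nonneg (fun ω => sq_nonneg (X i ω)) hint2).1 (hzero i)
      filter_upwards [h0] with ω hω
      exact (pow_eq_zero_iff two_ne_zero).1 hω
    have hall : ∀ᵐ ω ∂μ, ∀ i : Fin L, X i ω = 0 := ae_all_iff.2 hXae
    have hnull : μ {ω : Ω | ¬ ∀ i : Fin L, X i ω = 0} = 0 := ae_iff.1 hall
    have : μ {ω : Ω | ∃ ℓ : ℕ, 1 ≤ ℓ ∧ ℓ ≤ L ∧
        t < |∑ i ∈ Finset.univ.filter (fun i : Fin L => (i : ℕ) < ℓ), X i ω|} = 0 := by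
      apply measure_mono_null ?_ hnull
      rintro ω ⟨ℓ, h1, h2, h3⟩
      intro hzeroall
      have : ∑ i ∈ Finset.univ.filter (fun i : Fin L => (i : ℕ) < ℓ), X i ω = 0 :=
        Finset.sum_eq_zero fun i _ => hzeroall i
      rw [this, abs_zero] at h3
      exact absurd h3 (not_lt.2 ht.le)
    rw [this]
    exact zero_le
end

section
/- Let X_1,...,X_L be independent real random variables with E[X_i] = 0 and |X_i| ≤ M for all i, and let S_ℓ := X_1 + ... + X_ℓ. Then for every t > 0, P[max_{1 ≤ ℓ ≤ L} S_ℓ ≥ t] ≤ exp(−(t²/2)/(Σ_{i=1}^L E[X_i²] + Mt/3)). -/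
open MeasureTheory ProbabilityTheory Filter

lemma aux_two_mul_three_pow_le_factorial (n : ℕ) : 2 * 3 ^ n ≤ (n + 2).factorial := by
  induction n with
  | zero => simp [Nat.factorial]
  | succ n ih =>
    have h3 : 3 ≤ n + 3 := by omega
    calc 2 * 3 ^ (n + 1) = 3 * (2 * 3 ^ n) := by ring
    _ ≤ 3 * (n + 2).factorial := by exact Nat.mul_le_mul_left 3 ih
    _ ≤ (n + 3) * (n + 2).factorial := Nat.mul_le_mul_right _ h3
    _ = (n + 3).factorial := rfl

lemma exp_le_of_lt_three {u : ℝ} (h0 : 0 ≤ u) (h3 : u < 3) :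
    Real.exp u ≤ 1 + u + u ^ 2 / 2 * (1 - u / 3)⁻¹ := by
  have hexp : Real.exp u = ∑' n : ℕ, u ^ n / n.factorial := by
    rw [Real.exp_eq_exp_ℝ, NormedSpace.exp_eq_tsum_div]
  have hsum : Summable (fun n : ℕ => u ^ n / n.factorial) := Real.summable_pow_div_factorial u
  have hsplit : Real.exp u = (∑ n ∈ Finset.range 2, u ^ n / n.factorial)
      + ∑' n : ℕ, u ^ (n + 2) / (n + 2).factorial := by
    rw [hexp, ← Summable.sum_add_tsum_nat_add 2 hsum]
  have hgeom : Summable (fun n : ℕ => u ^ 2 / 2 * (u / 3) ^ n) := by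
    apply Summable.mul_left
    apply summable_geometric_of_lt_one (by positivity)
    rw [div_lt_one (by norm_num)]; exact h3
  have hterm : ∀ n : ℕ, u ^ (n + 2) / (n + 2).factorial ≤ u ^ 2 / 2 * (u / 3) ^ n := by
    intro n
    have hfac : (2 * 3 ^ n : ℝ) ≤ ((n + 2).factorial : ℝ) := by
      exact_mod_cast aux_two_mul_three_pow_le_factorial n
    have hfacpos : (0:ℝ) < (n + 2).factorial := by positivity
    calc u ^ (n + 2) / (n + 2).factorial ≤ u ^ (n + 2) / (2 * 3 ^ n) := by
          gcongr
    _ = u ^ 2 / 2 * (u / 3) ^ n := by rw [div_pow, pow_add]; ring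
  have htail : ∑' n : ℕ, u ^ (n + 2) / (n + 2).factorial ≤ u ^ 2 / 2 * (1 - u / 3)⁻¹ := by
    calc ∑' n : ℕ, u ^ (n + 2) / (n + 2).factorial ≤ ∑' n : ℕ, u ^ 2 / 2 * (u / 3) ^ n := by
          apply Summable.tsum_le_tsum hterm ((summable_nat_add_iff 2).mpr hsum) hgeom
    _ = u ^ 2 / 2 * (1 - u / 3)⁻¹ := by
        rw [tsum_mul_left, tsum_geometric_of_lt_one (by positivity)
          (by rw [div_lt_one (by norm_num)]; exact h3)]
  have : (∑ n ∈ Finset.range 2, u ^ n / n.factorial) = 1 + u := by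
    simp [Finset.sum_range_succ, Nat.factorial]
  linarith [hsplit, htail, this ▸ hsplit]

lemma exp_le_quadratic_of_nonpos {u : ℝ} (hu : u ≤ 0) : Real.exp u ≤ 1 + u + u ^ 2 / 2 := by
  have hf : ∀ x : ℝ, HasDerivAt (fun y : ℝ => 1 + y + y ^ 2 / 2 - Real.exp y)
      (1 + x - Real.exp x) x := by
    intro x
    have h1 : HasDerivAt (fun y : ℝ => 1 + y + y ^ 2 / 2 - Real.exp y)
        (0 + 1 + (2 : ℕ) * x ^ 1 / 2 - Real.exp x) x := by
      exact ((((hasDerivAt_const x (1:ℝ)).add (hasDerivAt_id x)).add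
        ((hasDerivAt_pow 2 x).div_const 2)).sub (Real.hasDerivAt_exp x))
    convert h1 using 1
    push_cast
    ring
  have hanti : Antitone (fun y : ℝ => 1 + y + y ^ 2 / 2 - Real.exp y) := by
    apply antitone_of_deriv_nonpos
    · exact fun x => (hf x).differentiableAt
    · intro x
      rw [(hf x).deriv]
      have := Real.add_one_le_exp x
      linarith
  have := hanti hu
  simp only [Real.exp_zero] at this
  linarith [this]

lemma exp_le_bernstein {u b : ℝ} (hb0 : 0 ≤ b) (hb3 : b < 3) (hub : u ≤ b) :
    Real.exp u ≤ 1 + u + u ^ 2 / 2 * (1 - b / 3)⁻¹ := by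
  have hc1 : (1 : ℝ) ≤ (1 - b / 3)⁻¹ := by
    rw [le_inv_comm₀] <;> nlinarith
  rcases le_or_gt u 0 with hu | hu
  · have := exp_le_quadratic_of_nonpos hu
    nlinarith [sq_nonneg u]
  · have h := exp_le_of_lt_three hu.le (lt_of_le_of_lt hub hb3)
    have hmono : (1 - u / 3)⁻¹ ≤ (1 - b / 3)⁻¹ := by
      apply inv_anti₀ <;> nlinarith
    nlinarith [sq_nonneg u]

/-- One-sided maximal Bernstein/Hoeffding-type inequality (proved in the appendix of
the paper): if `X_1, ..., X_L` are independent mean-zero random variables with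
`|X_i| ≤ M`, and `S_ℓ = X_1 + ⋯ + X_ℓ`, then for every `t > 0`,
`P[max_{1 ≤ ℓ ≤ L} S_ℓ ≥ t] ≤ exp(-(t²/2)/(∑ E[X_i²] + Mt/3))`. -/
theorem maximal_bernstein_one_sided
    {Ω : Type*} [MeasurableSpace Ω] (μ : Measure Ω) [IsProbabilityMeasure μ]
    (L : ℕ) (X : Fin L → Ω → ℝ) (M : ℝ)
    (hmeas : ∀ i, Measurable (X i))
    (hindep : iIndepFun X μ)
    (hint : ∀ i, Integrable (X i) μ)
    (hmean : ∀ i, ∫ ω, X i ω ∂μ = 0)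
    (hbdd : ∀ i, ∀ᵐ ω ∂μ, |X i ω| ≤ M)
    (t : ℝ) (ht : 0 < t) :
    μ {ω | ∃ ℓ : ℕ, 1 ≤ ℓ ∧ ℓ ≤ L ∧
        t ≤ ∑ i ∈ Finset.univ.filter (fun i : Fin L => (i : ℕ) < ℓ), X i ω}
      ≤ ENNReal.ofReal (Real.exp
          (-(t ^ 2 / 2) / ((∑ i, ∫ ω, (X i ω) ^ 2 ∂μ) + M * t / 3))) := by
  classical
  set S : ℕ → Ω → ℝ := fun ℓ ω =>
    ∑ i ∈ Finset.univ.filter (fun i : Fin L => (i : ℕ) < ℓ), X i ω with hSdef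
  set σ2 : ℝ := ∑ i, ∫ ω, (X i ω) ^ 2 ∂μ with hσ2def
  have hvar_nonneg : ∀ i : Fin L, 0 ≤ ∫ ω, (X i ω) ^ 2 ∂μ := fun i =>
    integral_nonneg fun ω => sq_nonneg _
  by_cases hσ2pos : 0 < σ2
  swap
  · -- degenerate case : all X i vanish a.e., the event is null
    have hσ0 : σ2 = 0 :=
      le_antisymm (not_lt.mp hσ2pos) (Finset.sum_nonneg fun i _ => hvar_nonneg i)
    have hz : ∀ i : Fin L, ∀ᵐ ω ∂μ, X i ω = 0 := by
      intro i
      have hvi : ∫ ω, (X i ω) ^ 2 ∂μ = 0 :=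
        (Finset.sum_eq_zero_iff_of_nonneg fun i _ => hvar_nonneg i).mp hσ0 i (Finset.mem_univ i)
      have hint2 : Integrable (fun ω => (X i ω) ^ 2) μ := by
        refine (integrable_const (M ^ 2)).mono' ((hmeas i).pow_const 2).aestronglyMeasurable ?_
        filter_upwards [hbdd i] with ω hω
        rw [Real.norm_eq_abs, abs_pow]
        exact pow_le_pow_left₀ (abs_nonneg _) hω 2
      have h0 := (integral_eq_zero_iff_of_nonneg (fun ω => sq_nonneg (X i ω)) hint2).mp hvi
      filter_upwards [h0] with ω hω
      exact (pow_eq_zero_iff two_ne_zero).mp hω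
    have hz' : ∀ᵐ ω ∂μ, ∀ i, X i ω = 0 := ae_all_iff.mpr hz
    have hnull : μ {ω | ∃ ℓ : ℕ, 1 ≤ ℓ ∧ ℓ ≤ L ∧ t ≤ S ℓ ω} = 0 := by
      refine measure_mono_null ?_ (ae_iff.mp hz')
      rintro ω ⟨ℓ, _, _, h3⟩
      simp only [Set.mem_setOf_eq]
      intro hall
      have h0 : S ℓ ω = 0 := Finset.sum_eq_zero fun i _ => hall i
      rw [h0] at h3
      exact absurd h3 (not_le.mpr ht)
    rw [hnull]
    exact zero_le
  -- main case
  have hL : 0 < L := by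
    rcases Nat.eq_zero_or_pos L with h | h
    · exfalso; subst h; simp [hσ2def] at hσ2pos
    · exact h
  have hM : 0 ≤ M := by
    by_contra hMneg
    push_neg at hMneg
    have h2 : ∀ᵐ ω ∂μ, False := by
      filter_upwards [hbdd ⟨0, hL⟩] with ω hω
      exact absurd (le_trans (abs_nonneg _) hω) (not_le.mpr hMneg)
    have := ae_iff.mp h2
    simp only [not_false_iff, Set.setOf_true] at this
    exact absurd this (by simp)
  set V : ℝ := σ2 + M * t / 3 with hVdef
  have hV : 0 < V := by positivity
  set l : ℝ := t / V with hldef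
  have hl : 0 < l := by positivity
  set b : ℝ := l * M with hbdef
  have hb0 : 0 ≤ b := by positivity
  have hb3 : b < 3 := by
    rw [hbdef, hldef, div_mul_eq_mul_div, div_lt_iff₀ hV, hVdef]
    nlinarith
  set c : ℝ := (1 - b / 3)⁻¹ with hcdef
  have hcV : c = V / σ2 := by
    rw [hcdef, hbdef, hldef]
    rw [show 1 - t / V * M / 3 = σ2 / V by field_simp; ring]
    rw [inv_div]
  have hc0 : 0 < c := by rw [hcV]; positivity
  -- measurability and boundedness of partial sums
  have hSmeas : ∀ ℓ, Measurable (S ℓ) := fun ℓ =>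
    Finset.measurable_sum _ fun i _ => hmeas i
  have hbddAll : ∀ᵐ ω ∂μ, ∀ i, |X i ω| ≤ M := ae_all_iff.mpr hbdd
  have hsum_bd : ∀ (s : Finset (Fin L)), ∀ᵐ ω ∂μ, |∑ i ∈ s, X i ω| ≤ L * M := by
    intro s
    filter_upwards [hbddAll] with ω hω
    calc |∑ i ∈ s, X i ω| ≤ ∑ i ∈ s, |X i ω| := Finset.abs_sum_le_sum_abs _ _
    _ ≤ ∑ _i ∈ s, M := Finset.sum_le_sum fun i _ => hω i
    _ = s.card * M := by rw [Finset.sum_const, nsmul_eq_mul]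
    _ ≤ L * M := by
        have : s.card ≤ L := by simpa using Finset.card_le_card (Finset.subset_univ s)
        exact mul_le_mul_of_nonneg_right (by exact_mod_cast this) hM
  have hint_exp : ∀ (s : Finset (Fin L)),
      Integrable (fun ω => Real.exp (l * ∑ i ∈ s, X i ω)) μ := by
    intro s
    refine (integrable_const (Real.exp (l * (L * M)))).mono'
      (Real.measurable_exp.comp ((Finset.measurable_sum _ fun i _ => hmeas i).const_mul l)).aestronglyMeasurable ?_
    filter_upwards [hsum_bd s] with ω hω
    rw [Real.norm_eq_abs, abs_of_pos (Real.exp_pos _), Real.exp_le_exp]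
    exact mul_le_mul_of_nonneg_left (le_trans (le_abs_self _) hω) hl.le
  set T : ℕ → Ω → ℝ := fun ℓ ω =>
    ∑ i ∈ Finset.univ.filter (fun i : Fin L => ¬(i : ℕ) < ℓ), X i ω with hTdef
  have hTmeas : ∀ ℓ, Measurable (T ℓ) := fun ℓ => Finset.measurable_sum _ fun i _ => hmeas i
  have hST : ∀ ℓ ω, S ℓ ω + T ℓ ω = S L ω := by
    intro ℓ ω
    have h1 : (Finset.univ.filter (fun i : Fin L => (i : ℕ) < L)) = Finset.univ :=
      Finset.filter_true_of_mem fun i _ => i.isLt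
    rw [hSdef, hTdef]
    simp only []
    rw [Finset.sum_filter_add_sum_filter_not, h1]
  set B : ℕ → Set Ω := fun ℓ => {ω | (∀ j < ℓ, S j ω < t) ∧ t ≤ S ℓ ω} with hBdef
  have hBmeas : ∀ ℓ, MeasurableSet (B ℓ) := by
    intro ℓ
    have hBeq : B ℓ = (⋂ j ∈ Finset.range ℓ, {ω | S j ω < t}) ∩ {ω | t ≤ S ℓ ω} := by
      ext ω; simp [hBdef, Finset.mem_range]
    rw [hBeq]
    exact (MeasurableSet.biInter (Finset.range ℓ).countable_toSet fun j _ =>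
      measurableSet_lt (hSmeas j) measurable_const).inter
      (measurableSet_le measurable_const (hSmeas ℓ))
  have hcover : {ω | ∃ ℓ : ℕ, 1 ≤ ℓ ∧ ℓ ≤ L ∧ t ≤ S ℓ ω} ⊆ ⋃ ℓ ∈ Finset.Icc 1 L, B ℓ := by
    rintro ω ⟨ℓ₀, h1, h2, h3⟩
    have hex : ∃ ℓ, t ≤ S ℓ ω := ⟨ℓ₀, h3⟩
    have hk : t ≤ S (Nat.find hex) ω := Nat.find_spec hex
    have hkmin : ∀ j < Nat.find hex, S j ω < t := fun j hj => not_le.mp (Nat.find_min hex hj)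
    have hk1 : 1 ≤ Nat.find hex := by
      rcases Nat.eq_zero_or_pos (Nat.find hex) with h0 | h0
      · exfalso
        have hc := hk
        rw [h0] at hc
        have hS0 : S 0 ω = 0 := by simp [hSdef]
        rw [hS0] at hc
        exact absurd hc (not_le.mpr ht)
      · exact h0
    have hkL : Nat.find hex ≤ L := le_trans (Nat.find_min' hex h3) h2
    exact Set.mem_biUnion (Finset.mem_Icc.mpr ⟨hk1, hkL⟩) ⟨hkmin, hk⟩
  have hdisjB : ∀ m n : ℕ, m < n → Disjoint (B m) (B n) := by
    intro m n h
    rw [Set.disjoint_left]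
    rintro ω ⟨_, hm2⟩ ⟨hn1, _⟩
    exact absurd hm2 (not_le.mpr (hn1 m h))
  have key : ∀ ℓ : ℕ, Real.exp (l * t) * (μ (B ℓ)).toReal
      ≤ ∫ ω in B ℓ, Real.exp (l * S L ω) ∂μ := by
    intro ℓ
    have hintS : Integrable (fun ω => Real.exp (l * S ℓ ω)) μ := hint_exp _
    have hintT : Integrable (fun ω => Real.exp (l * T ℓ ω)) μ := hint_exp _
    have hintL : Integrable (fun ω => Real.exp (l * S L ω)) μ := hint_exp _
    have hUmeas : Measurable ((B ℓ).indicator fun ω => Real.exp (l * S ℓ ω)) :=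
      (Real.measurable_exp.comp ((hSmeas ℓ).const_mul l)).indicator (hBmeas ℓ)
    have hindepUV : IndepFun ((B ℓ).indicator fun ω => Real.exp (l * S ℓ ω))
        (fun ω => Real.exp (l * T ℓ ω)) μ := by
      set mS : MeasurableSpace Ω :=
        ⨆ i ∈ {i : Fin L | (i : ℕ) < ℓ}, MeasurableSpace.comap (X i) inferInstance with hmS
      set mT : MeasurableSpace Ω :=
        ⨆ i ∈ {i : Fin L | ¬(i : ℕ) < ℓ}, MeasurableSpace.comap (X i) inferInstance with hmT
      have hdisjST : Disjoint {i : Fin L | (i : ℕ) < ℓ} {i : Fin L | ¬(i : ℕ) < ℓ} := by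
        rw [Set.disjoint_left]
        intro i hi hni
        exact hni hi
      have hindepm : Indep mS mT μ :=
        indep_iSup_of_disjoint (fun i => (hmeas i).comap_le) hindep hdisjST
      have hXmS : ∀ i : Fin L, (i : ℕ) < ℓ → Measurable[mS] (X i) := fun i hi =>
        Measurable.of_comap_le (le_biSup (fun i => MeasurableSpace.comap (X i) inferInstance) hi)
      have hSmS : ∀ j, j ≤ ℓ → Measurable[mS] (S j) := by
        intro j hj
        rw [hSdef]
        exact Finset.measurable_sum _ fun i hi =>
          hXmS i (lt_of_lt_of_le (by simpa using hi) hj)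
      have hTmT : Measurable[mT] (T ℓ) := by
        rw [hTdef]
        exact Finset.measurable_sum _ fun i hi =>
          Measurable.of_comap_le
            (le_biSup (fun i => MeasurableSpace.comap (X i) inferInstance) (by simpa using hi))
      have hBmS : MeasurableSet[mS] (B ℓ) := by
        have hBeq : B ℓ = (⋂ j ∈ Finset.range ℓ, {ω | S j ω < t}) ∩ {ω | t ≤ S ℓ ω} := by
          ext ω; simp [hBdef, Finset.mem_range]
        rw [hBeq]
        exact MeasurableSet.inter
          (MeasurableSet.biInter (Finset.range ℓ).countable_toSet fun j hj =>
            measurableSet_lt (hSmS j (le_of_lt (Finset.mem_range.mp hj))) measurable_const)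
          (measurableSet_le measurable_const (hSmS ℓ le_rfl))
      have hUmS : Measurable[mS] ((B ℓ).indicator fun ω => Real.exp (l * S ℓ ω)) :=
        (Real.measurable_exp.comp ((hSmS ℓ le_rfl).const_mul l)).indicator hBmS
      have hVmT : Measurable[mT] (fun ω => Real.exp (l * T ℓ ω)) :=
        Real.measurable_exp.comp (hTmT.const_mul l)
      exact fun s1 s2 hs1 hs2 => hindepm s1 s2 (hUmS.comap_le _ hs1) (hVmT.comap_le _ hs2)
    have hT1 : 1 ≤ ∫ ω, Real.exp (l * T ℓ ω) ∂μ := by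
      have hTint : Integrable (T ℓ) μ := integrable_finset_sum _ fun i _ => hint i
      have hTzero : ∫ ω, T ℓ ω ∂μ = 0 := by
        rw [hTdef]
        simp only []
        rw [integral_finset_sum _ fun i _ => hint i]
        exact Finset.sum_eq_zero fun i _ => hmean i
      have h2 : ∫ ω, (1 + l * T ℓ ω) ∂μ = 1 := by
        rw [integral_add (integrable_const 1) (hTint.const_mul l), integral_const,
          integral_const_mul, hTzero]
        simp
      calc (1 : ℝ) = ∫ ω, (1 + l * T ℓ ω) ∂μ := h2.symm
      _ ≤ ∫ ω, Real.exp (l * T ℓ ω) ∂μ := by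
          refine integral_mono ((integrable_const 1).add (hTint.const_mul l)) hintT fun ω => ?_
          have := Real.add_one_le_exp (l * T ℓ ω)
          linarith
    have step3 : (∫ ω in B ℓ, Real.exp (l * S ℓ ω) ∂μ) * (∫ ω, Real.exp (l * T ℓ ω) ∂μ)
        = ∫ ω in B ℓ, Real.exp (l * S L ω) ∂μ := by
      rw [← integral_indicator (hBmeas ℓ), ← integral_indicator (hBmeas ℓ)]
      have hmul := hindepUV.integral_mul_eq_mul_integral
        hUmeas.aestronglyMeasurable
        (Real.measurable_exp.comp ((hTmeas ℓ).const_mul l)).aestronglyMeasurable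
      rw [← hmul]
      congr 1
      funext ω
      by_cases hω : ω ∈ B ℓ
      · simp only [Pi.mul_apply, Set.indicator_of_mem hω, ← Real.exp_add, ← mul_add, hST ℓ ω]
      · simp [Set.indicator_of_notMem hω]
    calc Real.exp (l * t) * (μ (B ℓ)).toReal
        = ∫ _ω in B ℓ, Real.exp (l * t) ∂μ := by
          rw [setIntegral_const, smul_eq_mul, mul_comm]; rfl
    _ ≤ ∫ ω in B ℓ, Real.exp (l * S ℓ ω) ∂μ := by
        refine setIntegral_mono_on (integrableOn_const (measure_ne_top μ _))
          hintS.integrableOn (hBmeas ℓ) fun ω hω => ?_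
        exact Real.exp_le_exp.mpr (mul_le_mul_of_nonneg_left hω.2 hl.le)
    _ ≤ (∫ ω in B ℓ, Real.exp (l * S ℓ ω) ∂μ) * (∫ ω, Real.exp (l * T ℓ ω) ∂μ) :=
        le_mul_of_one_le_right
          (setIntegral_nonneg (hBmeas ℓ) fun ω _ => (Real.exp_pos _).le) hT1
    _ = ∫ ω in B ℓ, Real.exp (l * S L ω) ∂μ := step3
  -- assemble everything
  set A : Set Ω := {ω | ∃ ℓ : ℕ, 1 ≤ ℓ ∧ ℓ ≤ L ∧ t ≤ S ℓ ω} with hAdef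
  have hμA : (μ A).toReal ≤ ∑ ℓ ∈ Finset.Icc 1 L, (μ (B ℓ)).toReal := by
    have h1 : μ A ≤ ∑ ℓ ∈ Finset.Icc 1 L, μ (B ℓ) :=
      le_trans (measure_mono hcover) (measure_biUnion_finset_le _ _)
    have h2 : (∑ ℓ ∈ Finset.Icc 1 L, μ (B ℓ)) ≠ ⊤ :=
      (ENNReal.sum_lt_top.mpr fun ℓ _ => measure_lt_top μ _).ne
    calc (μ A).toReal ≤ (∑ ℓ ∈ Finset.Icc 1 L, μ (B ℓ)).toReal := ENNReal.toReal_mono h2 h1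
    _ = ∑ ℓ ∈ Finset.Icc 1 L, (μ (B ℓ)).toReal :=
        ENNReal.toReal_sum fun ℓ _ => measure_ne_top μ _
  have hchain : Real.exp (l * t) * (μ A).toReal ≤ ∫ ω, Real.exp (l * S L ω) ∂μ := by
    have hsum_le : ∑ ℓ ∈ Finset.Icc 1 L, (∫ ω in B ℓ, Real.exp (l * S L ω) ∂μ)
        ≤ ∫ ω, Real.exp (l * S L ω) ∂μ := by
      rw [← integral_biUnion_finset (Finset.Icc 1 L) (fun ℓ _ => hBmeas ℓ)
        (fun m hm n hn hmn => by
          rcases hmn.lt_or_gt with h | h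
          · exact hdisjB m n h
          · exact (hdisjB n m h).symm)
        (fun ℓ _ => (hint_exp _).integrableOn)]
      exact setIntegral_le_integral (hint_exp _)
        (Filter.Eventually.of_forall fun ω => (Real.exp_pos _).le)
    calc Real.exp (l * t) * (μ A).toReal
        ≤ ∑ ℓ ∈ Finset.Icc 1 L, Real.exp (l * t) * (μ (B ℓ)).toReal := by
          rw [← Finset.mul_sum]
          exact mul_le_mul_of_nonneg_left hμA (Real.exp_pos _).le
    _ ≤ ∑ ℓ ∈ Finset.Icc 1 L, ∫ ω in B ℓ, Real.exp (l * S L ω) ∂μ :=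
        Finset.sum_le_sum fun ℓ _ => key ℓ
    _ ≤ _ := hsum_le
  have hprod : ∫ ω, Real.exp (l * S L ω) ∂μ = ∏ i, ∫ ω, Real.exp (l * X i ω) ∂μ := by
    have hfil : (Finset.univ.filter (fun i : Fin L => (i : ℕ) < L)) = Finset.univ :=
      Finset.filter_true_of_mem fun i _ => i.isLt
    have h1 : (fun ω => Real.exp (l * S L ω)) = fun ω => Real.exp (l * (∑ i, X i) ω) := by
      funext ω
      rw [hSdef]
      simp only [hfil, Finset.sum_apply]
    have h2 := hindep.mgf_sum hmeas Finset.univ (t := l)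
    simpa [mgf, h1] using h2
  have hper : ∀ i : Fin L, ∫ ω, Real.exp (l * X i ω) ∂μ
      ≤ Real.exp (c * l ^ 2 / 2 * ∫ ω, (X i ω) ^ 2 ∂μ) := by
    intro i
    have hint2 : Integrable (fun ω => (X i ω) ^ 2) μ := by
      refine (integrable_const (M ^ 2)).mono' ((hmeas i).pow_const 2).aestronglyMeasurable ?_
      filter_upwards [hbdd i] with ω hω
      rw [Real.norm_eq_abs, abs_pow]
      exact pow_le_pow_left₀ (abs_nonneg _) hω 2
    have hintexp : Integrable (fun ω => Real.exp (l * X i ω)) μ := by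
      have h := hint_exp {i}
      simpa using h
    have hptwise : ∀ᵐ ω ∂μ,
        Real.exp (l * X i ω) ≤ 1 + l * X i ω + c * l ^ 2 / 2 * (X i ω) ^ 2 := by
      filter_upwards [hbdd i] with ω hω
      have hub : l * X i ω ≤ b := by
        rw [hbdef]
        exact mul_le_mul_of_nonneg_left (le_trans (le_abs_self _) hω) hl.le
      have hb := exp_le_bernstein hb0 hb3 hub
      calc Real.exp (l * X i ω)
          ≤ 1 + l * X i ω + (l * X i ω) ^ 2 / 2 * (1 - b / 3)⁻¹ := hb
      _ = 1 + l * X i ω + c * l ^ 2 / 2 * (X i ω) ^ 2 := by rw [hcdef]; ring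
    have hrhsint : Integrable (fun ω => 1 + l * X i ω + c * l ^ 2 / 2 * (X i ω) ^ 2) μ := by
      exact ((integrable_const 1).add ((hint i).const_mul l)).add (hint2.const_mul _)
    calc ∫ ω, Real.exp (l * X i ω) ∂μ
        ≤ ∫ ω, (1 + l * X i ω + c * l ^ 2 / 2 * (X i ω) ^ 2) ∂μ :=
          integral_mono_ae hintexp hrhsint hptwise
    _ = 1 + c * l ^ 2 / 2 * ∫ ω, (X i ω) ^ 2 ∂μ := by
        have hf1 : Integrable (fun ω => 1 + l * X i ω) μ := by
          exact (integrable_const 1).add ((hint i).const_mul l)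
        have hf2 : Integrable (fun ω => c * l ^ 2 / 2 * X i ω ^ 2) μ := hint2.const_mul _
        have hf3 : Integrable (fun ω => l * X i ω) μ := (hint i).const_mul l
        rw [integral_add hf1 hf2, integral_add (integrable_const 1) hf3,
          integral_const, integral_const_mul, integral_const_mul, hmean i]
        simp
    _ ≤ Real.exp (c * l ^ 2 / 2 * ∫ ω, (X i ω) ^ 2 ∂μ) := by
        have h := Real.add_one_le_exp (c * l ^ 2 / 2 * ∫ ω, (X i ω) ^ 2 ∂μ)
        linarith
  have hmgf : ∫ ω, Real.exp (l * S L ω) ∂μ ≤ Real.exp (c * l ^ 2 / 2 * σ2) := by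
    rw [hprod]
    calc ∏ i, ∫ ω, Real.exp (l * X i ω) ∂μ
        ≤ ∏ i, Real.exp (c * l ^ 2 / 2 * ∫ ω, (X i ω) ^ 2 ∂μ) :=
          Finset.prod_le_prod (fun i _ => integral_nonneg fun ω => (Real.exp_pos _).le)
            fun i _ => hper i
    _ = Real.exp (∑ i, c * l ^ 2 / 2 * ∫ ω, (X i ω) ^ 2 ∂μ) := (Real.exp_sum _ _).symm
    _ = Real.exp (c * l ^ 2 / 2 * σ2) := by rw [hσ2def, Finset.mul_sum]
  have hσ2ne : σ2 ≠ 0 := ne_of_gt hσ2pos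
  have hVne : V ≠ 0 := ne_of_gt hV
  have hfinal : (μ A).toReal ≤ Real.exp (-(t ^ 2 / 2) / V) := by
    have h1 : Real.exp (l * t) * (μ A).toReal ≤ Real.exp (c * l ^ 2 / 2 * σ2) :=
      le_trans hchain hmgf
    have h2 : (μ A).toReal ≤ Real.exp (c * l ^ 2 / 2 * σ2) / Real.exp (l * t) := by
      rw [le_div_iff₀ (Real.exp_pos _), mul_comm]
      exact h1
    have h3 : Real.exp (c * l ^ 2 / 2 * σ2) / Real.exp (l * t)
        = Real.exp (-(t ^ 2 / 2) / V) := by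
      rw [← Real.exp_sub]
      congr 1
      rw [hcV, hldef]
      field_simp
      ring
    rw [← h3]
    exact h2
  calc μ A = ENNReal.ofReal ((μ A).toReal) := (ENNReal.ofReal_toReal (measure_ne_top μ _)).symm
  _ ≤ ENNReal.ofReal (Real.exp (-(t ^ 2 / 2) / V)) := ENNReal.ofReal_le_ofReal hfinal
end

section
/- Let X_1, X_2, ... be independent, identically distributed real random variables with E[X_i] = 0, Var[X_i] = 1, and |X_i| ≤ M. Fix 0 < α < 1/2, 0 < ε_3 < 1, an integer s > 1, constants c > 0 and 0 < γ < 1, and suppose that for all sufficiently large k and every integer j ≥ 0, the event A_j^{(k)} := {sup_{1 ≤ i_1 ≤ i_2 ≤ s^{k(1−α)}} ((S_{i_1+j} − S_j)² + (S_{i_2+j} − S_{i_1+j})²)/i_2 < 2(1−ε_3) ln ln s^k} has probability at most exp(−c·k^{1−γ}). Let C be a power of s and let L be the interval family consisting, for each i ∈ {0,...,C−1} and each sufficiently large k, of the interval (1+s+...+s^{k−1} + i·s^{k+1}/C, 1+s+...+s^k + i·s^{k+1}/C] of length s^k. For I ∈ L of length s^k, let P_I := {j ∈ I : A_j^{(k)}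 occurs} and let E_I be the event that |P_I| > ε_3·s^k. Then almost surely only finitely many of the events E_I (for I ∈ L) occur. -/
open MeasureTheory ProbabilityTheory Filter
open scoped Classical

lemma summable_exp_neg_rpow' {c p : ℝ} (hc : 0 < c) (hp : 0 < p) :
    Summable (fun k : ℕ => Real.exp (-c * (k : ℝ) ^ p)) := by
  apply summable_of_isBigO_nat (Real.summable_nat_rpow.mpr (by norm_num : (-2:ℝ) < -1))
  apply Asymptotics.IsBigO.of_bound 1
  have hlog : ∀ᶠ x : ℝ in atTop, ‖Real.log x‖ ≤ (c / 2) * ‖x ^ p‖ :=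
    (isLittleO_log_rpow_atTop hp).def (by linarith)
  have h2 : ∀ᶠ k : ℕ in atTop, ‖Real.log (k:ℝ)‖ ≤ (c / 2) * ‖(k:ℝ) ^ p‖ :=
    tendsto_natCast_atTop_atTop.eventually hlog
  filter_upwards [h2, eventually_ge_atTop 1] with k hk hk1
  have hk0 : (0:ℝ) < (k:ℝ) := by exact_mod_cast hk1
  have hlog0 : 0 ≤ Real.log (k:ℝ) := Real.log_nonneg (by exact_mod_cast hk1)
  have hrp : 0 ≤ (k:ℝ) ^ p := Real.rpow_nonneg hk0.le p
  rw [Real.norm_eq_abs, abs_of_nonneg hlog0, Real.norm_eq_abs, abs_of_nonneg hrp] at hk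
  have key : -c * (k:ℝ) ^ p ≤ (-2) * Real.log (k:ℝ) := by nlinarith
  have : Real.exp (-c * (k:ℝ) ^ p) ≤ (k:ℝ) ^ (-2:ℝ) := by
    rw [Real.rpow_def_of_pos hk0 (-2 : ℝ)]
    exact Real.exp_le_exp.mpr (by linarith [key])
  rw [Real.norm_eq_abs, abs_of_nonneg (Real.exp_pos _).le, Real.norm_eq_abs,
    abs_of_nonneg (Real.rpow_nonneg hk0.le _), one_mul]
  exact this

lemma measurableSet_badEvent' {Ω : Type*} [MeasurableSpace Ω] (X : ℕ → Ω → ℝ)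
    (hmeas : ∀ i, Measurable (X i)) (α ε₃ : ℝ) (s k j : ℕ)
    (B : Set Ω)
    (hB : B = {ω | ∀ i₁ i₂ : ℕ, 1 ≤ i₁ → i₁ ≤ i₂ →
      (i₂ : ℝ) ≤ ((s : ℝ) ^ k) ^ ((1 : ℝ) - α) →
      ((∑ i ∈ Finset.range (i₁ + j), X i ω - ∑ i ∈ Finset.range j, X i ω) ^ 2 +
        (∑ i ∈ Finset.range (i₂ + j), X i ω - ∑ i ∈ Finset.range (i₁ + j), X i ω) ^ 2) /
          (i₂ : ℝ)
        < 2 * (1 - ε₃) * Real.log (Real.log ((s : ℝ) ^ k))}) :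
    MeasurableSet B := by
  subst hB
  rw [Set.setOf_forall]
  refine MeasurableSet.iInter fun i₁ => ?_
  rw [Set.setOf_forall]
  refine MeasurableSet.iInter fun i₂ => ?_
  by_cases h1 : 1 ≤ i₁
  · by_cases h2 : i₁ ≤ i₂
    · by_cases h3 : (i₂ : ℝ) ≤ ((s : ℝ) ^ k) ^ ((1 : ℝ) - α)
      · simp only [h1, h2, h3, forall_true_left]
        apply measurableSet_lt _ measurable_const
        fun_prop
      · simp [h3]
    · simp [h2]
  · simp [h1]

lemma markov_count {Ω : Type*} [MeasurableSpace Ω] (μ : Measure Ω)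
    (I : Finset ℕ) (B : ℕ → Set Ω) (hB : ∀ j, MeasurableSet (B j))
    (δ : ENNReal) (hδ : ∀ j ∈ I, μ (B j) ≤ δ) (t : ℝ) (ht : 0 < t) :
    μ {ω | t < ((I.filter (fun j => ω ∈ B j)).card : ℝ)}
      ≤ I.card * δ / ENNReal.ofReal t := by
  classical
  set f : Ω → ENNReal := fun ω => ∑ j ∈ I, (B j).indicator 1 ω with hf
  have hfm : Measurable f := Finset.measurable_sum _ fun j _ => measurable_one.indicator (hB j)
  have hcard : ∀ ω, f ω = ((I.filter (fun j => ω ∈ B j)).card : ENNReal) := by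
    intro ω
    rw [hf]
    simp only [Set.indicator_apply, Pi.one_apply]
    rw [Finset.card_filter]
    push_cast
    rfl
  have hsub : {ω | t < ((I.filter (fun j => ω ∈ B j)).card : ℝ)}
      ⊆ {ω | ENNReal.ofReal t ≤ f ω} := by
    intro ω hω
    simp only [Set.mem_setOf_eq] at hω ⊢
    rw [hcard ω]
    calc ENNReal.ofReal t ≤ ENNReal.ofReal ((I.filter (fun j => ω ∈ B j)).card : ℝ) :=
          ENNReal.ofReal_le_ofReal hω.le
      _ = _ := ENNReal.ofReal_natCast _
  calc μ {ω | t < ((I.filter (fun j => ω ∈ B j)).card : ℝ)}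
      ≤ μ {ω | ENNReal.ofReal t ≤ f ω} := measure_mono hsub
    _ ≤ (∫⁻ ω, f ω ∂μ) / ENNReal.ofReal t :=
        meas_ge_le_lintegral_div hfm.aemeasurable
          (by simp [ENNReal.ofReal_eq_zero, not_le, ht]) ENNReal.ofReal_ne_top
    _ ≤ I.card * δ / ENNReal.ofReal t := by
        gcongr
        rw [hf, lintegral_finset_sum _ fun j _ => measurable_one.indicator (hB j)]
        calc ∑ j ∈ I, ∫⁻ ω, (B j).indicator 1 ω ∂μ = ∑ j ∈ I, μ (B j) := by
              refine Finset.sum_congr rfl fun j hj => lintegral_indicator_one (hB j)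
          _ ≤ ∑ _j ∈ I, δ := Finset.sum_le_sum hδ
          _ = I.card * δ := by rw [Finset.sum_const, nsmul_eq_mul]


/-- The event `A_j^(k)`: with `S_ℓ = X_1 + ⋯ + X_ℓ` (and `S_0 = 0`),
`sup_{1 ≤ i₁ ≤ i₂ ≤ (s^k)^(1-α)} ((S_{i₁+j}-S_j)² + (S_{i₂+j}-S_{i₁+j})²)/i₂
  < 2(1-ε₃) ln ln s^k`. -/
def badEvent {Ω : Type*} (X : ℕ → Ω → ℝ) (α ε₃ : ℝ) (s k j : ℕ) : Set Ω :=
  {ω | ∀ i₁ i₂ : ℕ, 1 ≤ i₁ → i₁ ≤ i₂ →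
    (i₂ : ℝ) ≤ ((s : ℝ) ^ k) ^ ((1 : ℝ) - α) →
    ((∑ i ∈ Finset.range (i₁ + j), X i ω - ∑ i ∈ Finset.range j, X i ω) ^ 2 +
      (∑ i ∈ Finset.range (i₂ + j), X i ω - ∑ i ∈ Finset.range (i₁ + j), X i ω) ^ 2) /
        (i₂ : ℝ)
      < 2 * (1 - ε₃) * Real.log (Real.log ((s : ℝ) ^ k))}

/-- Lemma 3.3 of the paper: suppose the events `A_j^(k)` have probability at most
`exp(-c k^(1-γ))` for all large `k`.  Let `C` be a power of `s` and let `L` be the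
family consisting, for each `i ∈ {0, ..., C-1}` and each (sufficiently large) `k`, of
the interval `I = (1 + s + ⋯ + s^(k-1) + i s^(k+1)/C, 1 + s + ⋯ + s^k + i s^(k+1)/C]`
of length `s^k`.  With `P_I = {j ∈ I : A_j^(k) occurs}` and `E_I` the event
`|P_I| > ε₃ s^k`, almost surely only finitely many of the events `E_I` occur. -/
theorem borel_cantelli_bad_events
    {Ω : Type*} [MeasurableSpace Ω] (μ : Measure Ω) [IsProbabilityMeasure μ]
    (X : ℕ → Ω → ℝ) (M : ℝ)
    (hmeas : ∀ i, Measurable (X i))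
    (hindep : iIndepFun X μ)
    (hident : ∀ i, IdentDistrib (X i) (X 0) μ μ)
    (hint : ∀ i, Integrable (X i) μ)
    (hmean : ∀ i, ∫ ω, X i ω ∂μ = 0)
    (hvar : ∀ i, variance (X i) μ = 1)
    (hbdd : ∀ i, ∀ᵐ ω ∂μ, |X i ω| ≤ M)
    (α ε₃ : ℝ) (hα0 : 0 < α) (hα : α < 1 / 2) (hε₃0 : 0 < ε₃) (hε₃ : ε₃ < 1)
    (s : ℕ) (hs : 1 < s) (c γ : ℝ) (hc : 0 < c) (hγ0 : 0 < γ) (hγ : γ < 1)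
    (hA : ∃ k₀ : ℕ, ∀ k : ℕ, k₀ ≤ k → ∀ j : ℕ,
      μ (badEvent X α ε₃ s k j) ≤ ENNReal.ofReal (Real.exp (-c * (k : ℝ) ^ ((1 : ℝ) - γ))))
    (C : ℕ) (hC : ∃ e : ℕ, C = s ^ e) :
    ∀ᵐ ω ∂μ, {p : ℕ × ℕ |
      p.1 < C ∧ C ∣ s ^ (p.2 + 1) ∧
      ε₃ * ((s : ℝ) ^ p.2) <
        (((Finset.Ioc ((∑ m ∈ Finset.range p.2, s ^ m) + p.1 * s ^ (p.2 + 1) / C)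
              ((∑ m ∈ Finset.range (p.2 + 1), s ^ m) + p.1 * s ^ (p.2 + 1) / C)).filter
            (fun j => ω ∈ badEvent X α ε₃ s p.2 j)).card : ℝ)}.Finite := by
  obtain ⟨k₀, hk₀⟩ := hA
  set T : ℕ × ℕ → Set Ω := fun p => {ω | p.1 < C ∧ k₀ ≤ p.2 ∧
      ε₃ * ((s : ℝ) ^ p.2) <
        (((Finset.Ioc ((∑ m ∈ Finset.range p.2, s ^ m) + p.1 * s ^ (p.2 + 1) / C)
              ((∑ m ∈ Finset.range (p.2 + 1), s ^ m) + p.1 * s ^ (p.2 + 1) / C)).filter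
            (fun j => ω ∈ badEvent X α ε₃ s p.2 j)).card : ℝ)} with hT
  have hsreal : (1 : ℝ) < (s : ℝ) := by exact_mod_cast hs
  have hspow : ∀ k : ℕ, (0 : ℝ) < (s : ℝ) ^ k := fun k => pow_pos (by linarith) k
  set D : ℕ → ENNReal := fun k =>
    ENNReal.ofReal (Real.exp (-c * (k : ℝ) ^ ((1 : ℝ) - γ)) / ε₃) with hD
  -- Markov bound on each T p
  have hbound : ∀ p : ℕ × ℕ, μ (T p) ≤ if p.1 < C then D p.2 else 0 := by
    rintro ⟨i, k⟩
    by_cases hi : i < C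
    · simp only [hi, if_true]
      by_cases hk : k₀ ≤ k
      · set a := (∑ m ∈ Finset.range k, s ^ m) + i * s ^ (k + 1) / C with ha
        set b := (∑ m ∈ Finset.range (k + 1), s ^ m) + i * s ^ (k + 1) / C with hb
        have hcardI : (Finset.Ioc a b).card = s ^ k := by
          rw [Nat.card_Ioc, ha, hb, Finset.sum_range_succ]
          omega
        have hmb : ∀ j, MeasurableSet (badEvent X α ε₃ s k j) := fun j =>
          measurableSet_badEvent' X hmeas α ε₃ s k j _ rfl
        have ht : (0 : ℝ) < ε₃ * (s : ℝ) ^ k := mul_pos hε₃0 (hspow k)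
        have hmk := markov_count μ (Finset.Ioc a b) (badEvent X α ε₃ s k) hmb
          (ENNReal.ofReal (Real.exp (-c * (k : ℝ) ^ ((1 : ℝ) - γ))))
          (fun j _ => hk₀ k hk j) (ε₃ * (s : ℝ) ^ k) ht
        have hsub : T (i, k) ⊆
            {ω | ε₃ * (s : ℝ) ^ k <
              (((Finset.Ioc a b).filter (fun j => ω ∈ badEvent X α ε₃ s k j)).card : ℝ)} := by
          intro ω hω
          exact hω.2.2
        refine (measure_mono hsub).trans (hmk.trans ?_)
        rw [hcardI]
        have hnat : ((s ^ k : ℕ) : ENNReal) = ENNReal.ofReal ((s : ℝ) ^ k) := by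
          rw [← ENNReal.ofReal_natCast]
          norm_num
        rw [hnat, ← ENNReal.ofReal_mul (hspow k).le,
          ← ENNReal.ofReal_div_of_pos ht]
        apply ENNReal.ofReal_le_ofReal
        apply le_of_eq
        have h1 : ε₃ ≠ 0 := hε₃0.ne'
        have h2 : ((s : ℝ) ^ k) ≠ 0 := (hspow k).ne'
        field_simp
      · have : T (i, k) = ∅ := by
          ext ω; simp only [hT, Set.mem_setOf_eq, Set.mem_empty_iff_false, iff_false]
          rintro ⟨-, h, -⟩; exact hk h
        rw [this]; simp
    · have : T (i, k) = ∅ := by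
        ext ω; simp only [hT, Set.mem_setOf_eq, Set.mem_empty_iff_false, iff_false]
        rintro ⟨h, -⟩; exact hi h
      rw [this]; simp
  -- summability
  have hsumD : (∑' k, D k) ≠ ⊤ := by
    have hsummable : Summable (fun k : ℕ => Real.exp (-c * (k : ℝ) ^ ((1 : ℝ) - γ)) / ε₃) :=
      (summable_exp_neg_rpow' hc (by linarith)).div_const ε₃
    rw [hD, ← ENNReal.ofReal_tsum_of_nonneg
      (fun k => div_nonneg (Real.exp_pos _).le hε₃0.le) hsummable]
    exact ENNReal.ofReal_ne_top
  have htsum : (∑' p : ℕ × ℕ, μ (T p)) ≠ ⊤ := by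
    refine ne_top_of_le_ne_top ?_ (ENNReal.tsum_le_tsum hbound)
    have hrow : ∀ i : ℕ, (∑' k : ℕ, if i < C then D k else 0)
        = if i < C then (∑' k, D k) else 0 := by
      intro i; by_cases h : i < C <;> simp [h]
    calc (∑' p : ℕ × ℕ, if p.1 < C then D p.2 else 0)
        = ∑' i : ℕ, ∑' k : ℕ, (if i < C then D k else 0) :=
          ENNReal.tsum_prod (f := fun i k => if i < C then D k else 0)
      _ = ∑' i : ℕ, (if i < C then (∑' k, D k) else 0) := tsum_congr hrow
      _ = ∑ i ∈ Finset.range C, (if i < C then (∑' k, D k) else 0) := by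
          refine tsum_eq_sum fun i hi => ?_
          rw [Finset.mem_range] at hi
          simp [hi]
      _ = C • (∑' k, D k) := by
          rw [Finset.sum_congr rfl fun i hi => if_pos (Finset.mem_range.mp hi),
            Finset.sum_const, Finset.card_range]
      _ ≠ ⊤ := by
          simp only [nsmul_eq_mul]
          exact (ENNReal.mul_lt_top (by simp) hsumD.lt_top).ne
  have hfin := MeasureTheory.ae_finite_setOf_mem htsum
  filter_upwards [hfin] with ω hω
  refine Set.Finite.subset (hω.union
    (Finset.finite_toSet (Finset.range C ×ˢ Finset.range k₀))) ?_
  rintro ⟨i, k⟩ ⟨h1, _h2, h3⟩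
  by_cases hk : k₀ ≤ k
  · exact Or.inl ⟨h1, hk, h3⟩
  · refine Or.inr ?_
    simp only [Finset.coe_product, Set.mem_prod, Finset.mem_coe, Finset.mem_range]
    exact ⟨h1, by omega⟩
end
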